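/- Let Q be a symmetric positive definite d×d real matrix and A a d×d real matrix satisfying the Lyapunov equation A^T Q + Q A = I. Set a = 1/(2‖Q‖) and α_∞ = (1/2)‖A‖_Q^{-2}‖Q‖^{-1}, where ‖·‖_Q denotes the operator norm induced by the norm x ↦ √(xᵀQx). Then for any α ∈ [0, α_∞], ‖I − αA‖_Q² ≤ 1 − aα. -/

import Mathlib

open MeasureTheory Real Matrix Filter

noncomputable def specNorm {d : ℕ} (A : Matrix (Fin d) (Fin d) ℝ) : ℝ :=
  ‖LinearMap.toContinuousLinearMap (Matrix.toEuclideanLin A)‖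

noncomputable def qNorm {d : ℕ} (Q B : Matrix (Fin d) (Fin d) ℝ) : ℝ :=
  sSup {r : ℝ | ∃ x : Fin d → ℝ, x ⬝ᵥ Q.mulVec x = 1 ∧
    r = Real.sqrt (B.mulVec x ⬝ᵥ Q.mulVec (B.mulVec x))}

lemma dot_le_spec {d : ℕ} (Q : Matrix (Fin d) (Fin d) ℝ) (x : Fin d → ℝ) :
    x ⬝ᵥ Q.mulVec x ≤ specNorm Q * (x ⬝ᵥ x) := by
  set T := LinearMap.toContinuousLinearMap (Matrix.toEuclideanLin Q) with hT
  set e : EuclideanSpace ℝ (Fin d) := (WithLp.equiv 2 (Fin d → ℝ)).symm x with he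
  have h1 : x ⬝ᵥ Q.mulVec x = (inner ℝ e (T e) : ℝ) := by
    simp [hT, he, EuclideanSpace.inner_toLp_toLp,
      Matrix.toEuclideanLin_apply_piLp_toLp, dotProduct]
    exact dotProduct_comm _ _
  have h2 : x ⬝ᵥ x = (inner ℝ e e : ℝ) := by
    exact (EuclideanSpace.inner_toLp_toLp x x).symm
  have h3 : (inner ℝ e e : ℝ) = ‖e‖ * ‖e‖ := real_inner_self_eq_norm_mul_norm e
  have h4 : (inner ℝ e (T e) : ℝ) ≤ ‖e‖ * ‖T e‖ := real_inner_le_norm e (T e)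
  have h5 : ‖T e‖ ≤ ‖T‖ * ‖e‖ := T.le_opNorm e
  have h6 : (0:ℝ) ≤ ‖e‖ := norm_nonneg e
  rw [h1, h2, h3]
  calc (inner ℝ e (T e) : ℝ) ≤ ‖e‖ * ‖T e‖ := h4
    _ ≤ ‖e‖ * (‖T‖ * ‖e‖) := by nlinarith
    _ = ‖T‖ * (‖e‖ * ‖e‖) := by ring

lemma mulVec_dot {d : ℕ} (S : Matrix (Fin d) (Fin d) ℝ) (x w : Fin d → ℝ) :
    (S.mulVec x) ⬝ᵥ w = x ⬝ᵥ (Sᵀ.mulVec w) := by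
  rw [Matrix.dotProduct_mulVec, Matrix.vecMul_transpose]

/-- Proposition 1 (first part): if `AᵀQ + QA = I` with `Q` symmetric positive definite,
then for `a = 1/(2‖Q‖)` and `α∞ = (1/2)‖A‖_Q⁻²‖Q‖⁻¹`, every `α ∈ [0, α∞]` satisfies
`‖I − αA‖_Q² ≤ 1 − aα`. -/
theorem stmt0 {d : ℕ} (Q A : Matrix (Fin d) (Fin d) ℝ)
    (hQsymm : Q.IsSymm) (hQpd : Q.PosDef)
    (hLyap : Aᵀ * Q + Q * A = 1)
    (a αinf : ℝ)
    (ha : a = 1 / (2 * specNorm Q))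
    (hαinf : αinf = (1 / 2) * (qNorm Q A) ^ (-2 : ℤ) * (specNorm Q)⁻¹) :
    ∀ α ∈ Set.Icc (0 : ℝ) αinf,
      qNorm Q (1 - α • A) ^ 2 ≤ 1 - a * α := by
  intro α hα
  obtain ⟨hα0, hα1⟩ := hα
  by_cases hex : ∃ x : Fin d → ℝ, x ⬝ᵥ Q.mulVec x = 1
  case neg =>
    have hset : ∀ B : Matrix (Fin d) (Fin d) ℝ,
        {r : ℝ | ∃ x : Fin d → ℝ, x ⬝ᵥ Q.mulVec x = 1 ∧
          r = Real.sqrt (B.mulVec x ⬝ᵥ Q.mulVec (B.mulVec x))} = ∅ := by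
      intro B
      ext r
      simp only [Set.mem_setOf_eq, Set.mem_empty_iff_false, iff_false]
      rintro ⟨x, hx, -⟩
      exact hex ⟨x, hx⟩
    have hq0 : ∀ B : Matrix (Fin d) (Fin d) ℝ, qNorm Q B = 0 := by
      intro B; unfold qNorm; rw [hset B, Real.sSup_empty]
    have hαinf0 : αinf = 0 := by
      rw [hαinf, hq0 A, _root_.zero_zpow (-2 : ℤ) (by norm_num)]; ring
    have hα' : α = 0 := le_antisymm (hαinf0 ▸ hα1) hα0
    rw [hα', hq0]
    norm_num
  case pos =>
    obtain ⟨x₀, hx₀⟩ := hex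
    -- square root of Q
    have hPS := hQpd.posSemidef
    set S := (open scoped MatrixOrder in CFC.sqrt Q) with hSdef
    have hSS : S * S = Q := by open scoped MatrixOrder in exact CFC.sqrt_mul_sqrt_self Q hPS.nonneg
    have hST : Sᵀ = S := by
      have h : Sᴴ = S := by open scoped MatrixOrder in exact (CFC.sqrt_nonneg Q).isSelfAdjoint
      rwa [Matrix.conjTranspose_eq_transpose_of_trivial] at h
    have hdetQ : 0 < Q.det := hQpd.det_pos
    have hdetS : IsUnit S.det := by
      have h : S.det * S.det = Q.det := by rw [← Matrix.det_mul, hSS]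
      refine isUnit_iff_ne_zero.mpr fun h0 => ?_
      rw [h0, mul_zero] at h
      exact hdetQ.ne h
    have hSinv : ∀ x : Fin d → ℝ, S⁻¹.mulVec (S.mulVec x) = x := by
      intro x
      rw [Matrix.mulVec_mulVec, Matrix.nonsing_inv_mul S hdetS, Matrix.one_mulVec]
    have hQform : ∀ v w : Fin d → ℝ, v ⬝ᵥ Q.mulVec w = (S.mulVec v) ⬝ᵥ (S.mulVec w) := by
      intro v w
      rw [mulVec_dot, hST, Matrix.mulVec_mulVec, hSS]
    have hdot_nonneg : ∀ w : Fin d → ℝ, 0 ≤ w ⬝ᵥ Q.mulVec w := by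
      intro w
      rw [hQform]
      exact Finset.sum_nonneg fun i _ => mul_self_nonneg _
    -- boundedness
    have hbound : ∀ (B : Matrix (Fin d) (Fin d) ℝ) (x : Fin d → ℝ), x ⬝ᵥ Q.mulVec x = 1 →
        (B.mulVec x) ⬝ᵥ Q.mulVec (B.mulVec x) ≤ specNorm ((S*B*S⁻¹)ᵀ * (S*B*S⁻¹)) := by
      intro B x hx
      set M := S * B * S⁻¹ with hM
      set z := S.mulVec x with hz
      have hz1 : z ⬝ᵥ z = 1 := by rw [hz, ← hQform, hx]
      have hu : M.mulVec z = S.mulVec (B.mulVec x) := by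
        rw [hz, Matrix.mulVec_mulVec, hM, Matrix.mul_assoc (S*B) S⁻¹ S,
          Matrix.nonsing_inv_mul S hdetS, Matrix.mul_one, ← Matrix.mulVec_mulVec]
      calc (B.mulVec x) ⬝ᵥ Q.mulVec (B.mulVec x)
          = (S.mulVec (B.mulVec x)) ⬝ᵥ (S.mulVec (B.mulVec x)) := hQform _ _
        _ = z ⬝ᵥ (Mᵀ * M).mulVec z := by
            rw [← hu, mulVec_dot, Matrix.mulVec_mulVec]
        _ ≤ specNorm (Mᵀ * M) * (z ⬝ᵥ z) := dot_le_spec _ z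
        _ = specNorm (Mᵀ * M) := by rw [hz1, mul_one]
    have hbdd : ∀ B : Matrix (Fin d) (Fin d) ℝ, BddAbove
        {r : ℝ | ∃ x : Fin d → ℝ, x ⬝ᵥ Q.mulVec x = 1 ∧
          r = Real.sqrt (B.mulVec x ⬝ᵥ Q.mulVec (B.mulVec x))} := by
      intro B
      refine ⟨Real.sqrt (specNorm ((S*B*S⁻¹)ᵀ * (S*B*S⁻¹))), ?_⟩
      rintro r ⟨x, hx, rfl⟩
      exact Real.sqrt_le_sqrt (hbound B x hx)
    set qA := qNorm Q A with hqA
    set sQ := specNorm Q with hsQ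
    have hmemA : ∀ x : Fin d → ℝ, x ⬝ᵥ Q.mulVec x = 1 →
        Real.sqrt (A.mulVec x ⬝ᵥ Q.mulVec (A.mulVec x)) ≤ qA := by
      intro x hx
      exact le_csSup (hbdd A) ⟨x, hx, rfl⟩
    have hcross : ∀ x : Fin d → ℝ,
        x ⬝ᵥ Q.mulVec (A.mulVec x) + A.mulVec x ⬝ᵥ Q.mulVec x = x ⬝ᵥ x := by
      intro x
      have h := congrArg (fun M : Matrix (Fin d) (Fin d) ℝ => x ⬝ᵥ (M.mulVec x)) hLyap
      simp only [Matrix.add_mulVec, Matrix.one_mulVec, ← Matrix.mulVec_mulVec,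
        dotProduct_add] at h
      rw [Matrix.dotProduct_mulVec x Aᵀ, Matrix.vecMul_transpose] at h
      linarith [h]
    have hqA_nonneg : 0 ≤ qA := by
      apply Real.sSup_nonneg
      rintro r ⟨x, hx, rfl⟩
      exact Real.sqrt_nonneg _
    -- Cauchy-Schwarz for the Q-form
    have hCS : ∀ x : Fin d → ℝ, x ⬝ᵥ Q.mulVec x = 1 →
        x ⬝ᵥ Q.mulVec (A.mulVec x) ≤ qA := by
      intro x hx
      set z := S.mulVec x with hz
      set w := S.mulVec (A.mulVec x) with hw
      have hz1 : z ⬝ᵥ z = 1 := by rw [hz, ← hQform, hx]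
      have h1 : x ⬝ᵥ Q.mulVec (A.mulVec x) = z ⬝ᵥ w := hQform _ _
      have h2 : (z ⬝ᵥ w) ^ 2 ≤ (z ⬝ᵥ z) * (w ⬝ᵥ w) := by
        have := Finset.sum_mul_sq_le_sq_mul_sq Finset.univ z w
        simpa [dotProduct, sq] using this
      have hww : 0 ≤ w ⬝ᵥ w := Finset.sum_nonneg fun i _ => mul_self_nonneg _
      have h3 : z ⬝ᵥ w ≤ Real.sqrt (w ⬝ᵥ w) := by
        rcases le_or_gt (z ⬝ᵥ w) 0 with h | h
        · exact h.trans (Real.sqrt_nonneg _)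
        · rw [← Real.sqrt_sq h.le]
          apply Real.sqrt_le_sqrt
          rw [hz1, one_mul] at h2
          exact h2
      have h4 : Real.sqrt (w ⬝ᵥ w) ≤ qA := by
        rw [hw, ← hQform]
        exact hmemA x hx
      rw [h1]
      exact h3.trans h4
    have hQcomm : ∀ v w : Fin d → ℝ, v ⬝ᵥ Q.mulVec w = w ⬝ᵥ Q.mulVec v := by
      intro v w
      rw [hQform, hQform, dotProduct_comm]
    -- positivity of sQ
    have hx₀ne : x₀ ≠ 0 := by rintro rfl; simp at hx₀
    have hn₀nonneg : 0 ≤ x₀ ⬝ᵥ x₀ := Finset.sum_nonneg fun i _ => mul_self_nonneg _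
    have hn₀ : (0:ℝ) < x₀ ⬝ᵥ x₀ :=
      hn₀nonneg.lt_of_ne' fun h3 => hx₀ne (dotProduct_self_eq_zero.mp h3)
    have hspec : (1:ℝ) ≤ sQ * (x₀ ⬝ᵥ x₀) := by
      have h := dot_le_spec Q x₀; rw [hx₀] at h; exact h
    have hsQpos : 0 < sQ := by nlinarith
    have hn₀le : x₀ ⬝ᵥ x₀ ≤ 2 * qA := by
      have h1 := hcross x₀
      have h2 := hCS x₀ hx₀
      have h3 : A.mulVec x₀ ⬝ᵥ Q.mulVec x₀ = x₀ ⬝ᵥ Q.mulVec (A.mulVec x₀) := hQcomm _ _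
      linarith
    have hqApos : 0 < qA := by nlinarith
    have h2sq : (1:ℝ) ≤ 2 * sQ * qA := by nlinarith
    -- rewrite αinf
    have hαinf' : αinf = 1 / (2 * qA ^ 2 * sQ) := by
      have h2 : qA ^ (-2:ℤ) = (qA ^ 2)⁻¹ := by
        rw [_root_.zpow_neg, zpow_two, sq]
      rw [hαinf, h2]
      field_simp
    have haα : a * α ≤ 1 := by
      have h1 : α ≤ 1 / (2 * qA ^ 2 * sQ) := hαinf' ▸ hα1
      rw [ha]
      rw [div_mul_eq_mul_div, one_mul, div_le_one (by positivity)]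
      calc α ≤ 1 / (2 * qA ^ 2 * sQ) := h1
        _ ≤ 2 * sQ := by
          rw [div_le_iff₀ (by positivity)]
          nlinarith
    have h1aα : 0 ≤ 1 - a * α := by linarith
    -- main per-vector bound
    have hmain : ∀ x : Fin d → ℝ, x ⬝ᵥ Q.mulVec x = 1 →
        ((1 - α • A).mulVec x ⬝ᵥ Q.mulVec ((1 - α • A).mulVec x)) ≤ 1 - a * α := by
      intro x hx
      set y := A.mulVec x with hy
      set s := y ⬝ᵥ Q.mulVec y with hs
      set n := x ⬝ᵥ x with hn
      have hs0 : 0 ≤ s := hdot_nonneg y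
      have hsle : s ≤ qA ^ 2 := by
        have h1 : Real.sqrt s ≤ qA := hmemA x hx
        nlinarith [Real.sq_sqrt hs0, Real.sqrt_nonneg s]
      have hnge : 1 ≤ sQ * n := by
        have h := dot_le_spec Q x; rw [hx] at h; exact h
      have hv : (1 - α • A).mulVec x ⬝ᵥ Q.mulVec ((1 - α • A).mulVec x)
          = 1 - α * n + α ^ 2 * s := by
        have hexp : (1 - α • A).mulVec x = x - α • y := by
          rw [Matrix.sub_mulVec, Matrix.one_mulVec, Matrix.smul_mulVec, hy]
        rw [hexp, Matrix.mulVec_sub, Matrix.mulVec_smul]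
        simp only [sub_dotProduct, dotProduct_sub, smul_dotProduct,
          dotProduct_smul, smul_eq_mul]
        rw [hx]
        linear_combination (-α) * hcross x
      rw [hv]
      have hα2 : α ^ 2 * s ≤ α * (1 / (2 * sQ)) := by
        have h1 : α ≤ 1 / (2 * qA ^ 2 * sQ) := hαinf' ▸ hα1
        have h2 : α * s ≤ (1 / (2 * qA ^ 2 * sQ)) * qA ^ 2 :=
          mul_le_mul h1 hsle hs0 (by positivity)
        have h3 : (1 / (2 * qA ^ 2 * sQ)) * qA ^ 2 = 1 / (2 * sQ) := by
          field_simp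
        calc α ^ 2 * s = α * (α * s) := by ring
          _ ≤ α * (1 / (2 * sQ)) := by
              rw [← h3]
              exact mul_le_mul_of_nonneg_left h2 hα0
      have hαn : α * (1 / sQ) ≤ α * n := by
        apply mul_le_mul_of_nonneg_left _ hα0
        rw [div_le_iff₀ hsQpos, mul_comm]
        exact hnge
      have haeq : a = 1 / (2 * sQ) := ha
      rw [haeq]
      have hhalf : (1:ℝ) / sQ - 1 / (2 * sQ) = 1 / (2 * sQ) := by
        field_simp
        ring
      nlinarith [hα2, hαn]
    -- conclude
    have hqle : qNorm Q (1 - α • A) ≤ Real.sqrt (1 - a * α) := by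
      apply Real.sSup_le _ (Real.sqrt_nonneg _)
      rintro r ⟨x, hx, rfl⟩
      exact Real.sqrt_le_sqrt (hmain x hx)
    have hqnn : 0 ≤ qNorm Q (1 - α • A) := by
      apply Real.sSup_nonneg
      rintro r ⟨x, hx, rfl⟩
      exact Real.sqrt_nonneg _
    calc qNorm Q (1 - α • A) ^ 2 ≤ Real.sqrt (1 - a * α) ^ 2 := by
          apply pow_le_pow_left₀ hqnn hqle
      _ = 1 - a * α := Real.sq_sqrt h1aα
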